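/- For any digital images X and Y and any i ≥ 2, CSᵢ(X,Y) ⊆ CS_{i+1}(X,Y). If moreover Y contains at least one pair of adjacent points, then CSᵢ(X,Y) = CS_{i+1}(X,Y) (and both equal {0,1,…,#X}). -/

import Mathlib

/-- A map between digital images is digitally continuous if adjacent points map to
equal or adjacent points. -/
def DigCont {X Y : Type*} (κX : X → X → Prop) (κY : Y → Y → Prop) (f : X → Y) : Prop :=
  ∀ x y, κX x y → f x = f y ∨ κY (f x) (f y)

/-- The coincidence point spectrum `CSᵢ(X,Y)`. -/
def CS {X Y : Type*} (κX : X → X → Prop) (κY : Y → Y → Prop) (i : ℕ) : Set ℕ :=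
  {n | ∃ f : Fin i → X → Y, (∀ j, DigCont κX κY (f j)) ∧
        n = ({x | ∀ j k, f j x = f k x} : Set X).ncard}

/-- For any `i ≥ 2`, `CSᵢ(X,Y) ⊆ CS_{i+1}(X,Y)`; if `Y` has a pair of adjacent points
then `CSᵢ(X,Y) = CS_{i+1}(X,Y)` and both equal `{0,1,…,#X}`. -/
theorem CS_succ_subset_and_eq {X Y : Type*} [Fintype X] [Fintype Y]
    (κX : X → X → Prop) (κY : Y → Y → Prop)
    (hsX : Symmetric κX) (hiX : Irreflexive κX)
    (hsY : Symmetric κY) (hiY : Irreflexive κY)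
    {i : ℕ} (hi : 2 ≤ i) :
    CS κX κY i ⊆ CS κX κY (i + 1) ∧
    ((∃ a b : Y, κY a b) →
      CS κX κY i = CS κX κY (i + 1) ∧
      CS κX κY i = {m | m ≤ Fintype.card X}) := by
  classical
  have hsub : ∀ j : ℕ, 2 ≤ j → CS κX κY j ⊆ CS κX κY (j + 1) := by
    intro j hj n hn
    obtain ⟨f, hf, rfl⟩ := hn
    refine ⟨fun k => f ⟨min k.val (j - 1), by omega⟩, fun k => hf _, ?_⟩
    congr 1
    ext x
    simp only [Set.mem_setOf_eq]
    constructor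
    · intro h p q
      exact h ⟨min p.val (j - 1), by omega⟩ ⟨min q.val (j - 1), by omega⟩
    · intro h p q
      have := h ⟨p.val, by omega⟩ ⟨q.val, by omega⟩
      have hp : (⟨min p.val (j - 1), by omega⟩ : Fin j) = p := by
        ext; simp; omega
      have hq : (⟨min q.val (j - 1), by omega⟩ : Fin j) = q := by
        ext; simp; omega
      simpa [hp, hq] using this
  have key : ∀ (a b : Y), κY a b → ∀ j : ℕ, 2 ≤ j →
      CS κX κY j = {m | m ≤ Fintype.card X} := by
    intro a b hab j hj
    have hne : a ≠ b := fun h => hiY b (h ▸ hab)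
    ext n
    simp only [Set.mem_setOf_eq]
    constructor
    · rintro ⟨f, hf, rfl⟩
      calc ({x | ∀ p q, f p x = f q x} : Set X).ncard
          ≤ (Set.univ : Set X).ncard :=
            Set.ncard_le_ncard (Set.subset_univ _) Set.finite_univ
        _ = Fintype.card X := by rw [Set.ncard_univ, Nat.card_eq_fintype_card]
    · intro hn
      obtain ⟨S, -, hS⟩ := Finset.exists_subset_card_eq (s := (Finset.univ : Finset X)) (n := n)
        (by simpa using hn)
      refine ⟨fun k x => if k.val = 0 then a else if x ∈ S then a else b, ?_, ?_⟩
      · intro k x y hxy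
        by_cases hk : k.val = 0
        · simp [hk]
        · simp only [hk, if_false]
          by_cases hx : x ∈ S <;> by_cases hy : y ∈ S <;>
            simp [hx, hy, hab, hsY hab]
      · rw [← hS, ← Set.ncard_coe_finset]
        congr 1
        ext x
        simp only [Set.mem_setOf_eq, Finset.coe_sort_coe, Finset.mem_coe]
        constructor
        · intro hx p q
          by_cases hp : p.val = 0 <;> by_cases hq : q.val = 0 <;>
            simp [hp, hq, hx]
        · intro h
          by_contra hx
          have := h ⟨0, by omega⟩ ⟨1, by omega⟩
          simp [hx] at this
          exact hne this
  refine ⟨hsub i hi, ?_⟩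
  rintro ⟨a, b, hab⟩
  have e1 := key a b hab i hi
  have e2 := key a b hab (i + 1) (by omega)
  exact ⟨e1.trans e2.symm, e1⟩
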